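/- arXiv:2504.21244 — 3 statements merged into one kernel-verified Lean document; each statement's English description precedes it below -/
import Mathlib

section
/- Let G be a connected graph on n vertices. For each vertex w, let H_w be the entropy of the empirical distribution of shortest-path distances from w, i.e., H_w = -∑_{t=0}^{Diam(G)} (|V_t(w)|/n) log(|V_t(w)|/n) where V_t(w) is the set of vertices at distance exactly t from w. If H_w ≤ H_max for all w, then the metric dimension of G is at least (log n)/H_max. -/
open scoped Classical

/-- The metric dimension of a graph: the minimum size of a set `W` of vertices
such that every pair of distinct vertices is separated by some `w ∈ W`
(i.e. lies at different distances from it). -/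
noncomputable def metricDim {V : Type*} [Fintype V] (G : SimpleGraph V) : ℕ :=
  sInf {k | ∃ W : Finset V, W.card = k ∧
    ∀ u v : V, u ≠ v → ∃ w ∈ W, G.dist u w ≠ G.dist v w}

/-- **Entropic lower bound on metric dimension.** If for every vertex `w` the
entropy of the empirical distribution of distances from `w` is at most `Hmax`,
then `MD(G) ≥ (log n) / Hmax`. -/
theorem stmt_1 {V : Type*} [Fintype V] (G : SimpleGraph V) (hG : G.Connected)
    (Hmax : ℝ) (hHmax : 0 < Hmax)
    (hent : ∀ w : V,
      (- ∑ t ∈ Finset.range (G.diam + 1),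
        (((Finset.univ.filter fun v : V => G.dist w v = t).card : ℝ) / Fintype.card V) *
          Real.log
            (((Finset.univ.filter fun v : V => G.dist w v = t).card : ℝ) / Fintype.card V))
        ≤ Hmax) :
    Real.log (Fintype.card V) / Hmax ≤ (metricDim G : ℝ) := by
  classical
  have hne : Nonempty V := hG.nonempty
  have hn0 : 0 < Fintype.card V := Fintype.card_pos
  set n : ℕ := Fintype.card V with hn
  have hnR : (0:ℝ) < (n:ℝ) := by exact_mod_cast hn0
  set D : ℕ := G.diam with hD
  set p : V → ℕ → ℝ := fun w t =>
    ((Finset.univ.filter fun v : V => G.dist w v = t).card : ℝ) / n with hp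
  have hent' : ∀ w : V,
      (- ∑ t ∈ Finset.range (D + 1), p w t * Real.log (p w t)) ≤ Hmax := by
    intro w
    simpa only [hp, hD, hn] using hent w
  have hediam : G.ediam ≠ ⊤ := by
    obtain ⟨u, v, huv⟩ := SimpleGraph.exists_edist_eq_ediam_of_finite (G := G)
    rw [← huv]
    exact (SimpleGraph.edist_ne_top_iff_reachable).mpr (hG u v)
  have hdle : ∀ u v : V, G.dist u v ≤ D := fun u v => SimpleGraph.dist_le_diam hediam
  have hmaps : ∀ w v : V, G.dist w v ∈ Finset.range (D+1) := fun w v =>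
    Finset.mem_range.mpr (Nat.lt_succ_of_le (hdle w v))
  have hp_nonneg : ∀ w t, 0 ≤ p w t := fun w t => by positivity
  have hp_pos : ∀ w v : V, 0 < p w (G.dist w v) := by
    intro w v
    apply div_pos _ hnR
    have hv : v ∈ Finset.univ.filter fun u : V => G.dist w u = G.dist w v := by simp
    exact_mod_cast Finset.card_pos.mpr ⟨v, hv⟩
  have hsum_p : ∀ w : V, ∑ t ∈ Finset.range (D+1), p w t = 1 := by
    intro w
    have hcard : ∑ t ∈ Finset.range (D+1),
        (Finset.univ.filter fun v : V => G.dist w v = t).card = n := by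
      have := (Finset.card_eq_sum_card_fiberwise (f := fun v : V => G.dist w v)
        (s := Finset.univ) (t := Finset.range (D+1)) (fun v _ => hmaps w v)).symm
      rw [this]
      simp [hn]
    simp only [hp]
    rw [← Finset.sum_div, div_eq_one_iff_eq hnR.ne']
    exact_mod_cast hcard
  -- a resolving set of minimum size exists
  have hset : (Finset.univ : Finset V).card ∈ {k | ∃ W : Finset V, W.card = k ∧
      ∀ u v : V, u ≠ v → ∃ w ∈ W, G.dist u w ≠ G.dist v w} := by
    refine ⟨Finset.univ, rfl, fun u v huv => ⟨u, Finset.mem_univ u, ?_⟩⟩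
    rw [SimpleGraph.dist_self]
    intro h
    exact huv ((hG.dist_eq_zero_iff).mp h.symm).symm
  have hmem : metricDim G ∈ {k | ∃ W : Finset V, W.card = k ∧
      ∀ u v : V, u ≠ v → ∃ w ∈ W, G.dist u w ≠ G.dist v w} :=
    Nat.sInf_mem ⟨_, hset⟩
  obtain ⟨W, hWcard, hWres⟩ := hmem
  -- the distance vector map
  set F : V → (↥W → ℕ) := fun v w => G.dist (w : V) v with hF
  have hFinj : Function.Injective F := by
    intro u v huvF
    by_contra huv
    obtain ⟨w, hwW, hwd⟩ := hWres u v huv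
    apply hwd
    have := congrFun huvF ⟨w, hwW⟩
    simp only [hF] at this
    simpa only [SimpleGraph.dist_comm] using this
  set q : V → ℝ := fun v => ∏ w : ↥W, p (w : V) (G.dist (w : V) v) with hq
  have hq_pos : ∀ v, 0 < q v := fun v => Finset.prod_pos fun w _ => hp_pos _ v
  -- sum of q is at most 1
  have hsumq : ∑ v : V, q v ≤ 1 := by
    have h1 : ∑ v : V, q v
        = ∑ f ∈ Finset.univ.image F, ∏ w : ↥W, p (w : V) (f w) := by
      rw [Finset.sum_image (fun a _ b _ h => hFinj h)]
    have h2 : ∑ f ∈ Finset.univ.image F, ∏ w : ↥W, p (w : V) (f w)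
        ≤ ∑ f ∈ Fintype.piFinset (fun _ : ↥W => Finset.range (D+1)),
            ∏ w : ↥W, p (w : V) (f w) := by
      apply Finset.sum_le_sum_of_subset_of_nonneg
      · intro f hf
        obtain ⟨v, _, rfl⟩ := Finset.mem_image.mp hf
        exact Fintype.mem_piFinset.mpr fun w => hmaps _ _
      · intro f _ _
        exact Finset.prod_nonneg fun w _ => hp_nonneg _ _
    have h3 : ∑ f ∈ Fintype.piFinset (fun _ : ↥W => Finset.range (D+1)),
        ∏ w : ↥W, p (w : V) (f w)
        = ∏ w : ↥W, ∑ t ∈ Finset.range (D+1), p (w : V) t :=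
      (Finset.prod_univ_sum _ _).symm
    have h4 : ∏ w : ↥W, ∑ t ∈ Finset.range (D+1), p (w : V) t = 1 := by
      simp only [hsum_p, Finset.prod_const_one]
    rw [h1]
    rw [h3] at h2
    rw [h4] at h2
    exact h2
  -- regrouping the entropy sum
  have hA : ∀ w : V, ∑ v : V, Real.log (p w (G.dist w v))
      = (n:ℝ) * ∑ t ∈ Finset.range (D+1), p w t * Real.log (p w t) := by
    intro w
    rw [← Finset.sum_fiberwise_of_maps_to (fun v _ => hmaps w v)
      (fun v : V => Real.log (p w (G.dist w v))), Finset.mul_sum]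
    refine Finset.sum_congr rfl fun t _ => ?_
    have hconst : ∀ v ∈ Finset.univ.filter fun v : V => G.dist w v = t,
        Real.log (p w (G.dist w v)) = Real.log (p w t) := fun v hv => by
      rw [(Finset.mem_filter.mp hv).2]
    rw [Finset.sum_congr rfl hconst, Finset.sum_const, nsmul_eq_mul]
    have hc : ((Finset.univ.filter fun v : V => G.dist w v = t).card : ℝ)
        = (n:ℝ) * p w t := by
      simp only [hp]
      field_simp
    rw [hc]
    ring
  have hlogq : ∀ v : V, Real.log (q v)
      = ∑ w : ↥W, Real.log (p (w : V) (G.dist (w : V) v)) := fun v =>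
    Real.log_prod fun w _ => (hp_pos _ v).ne'
  -- Gibbs-type inequality
  have hB : (n:ℝ) * Real.log n ≤ - ∑ v : V, Real.log (q v) := by
    have h1 : ∑ v : V, Real.log ((n:ℝ) * q v) ≤ ∑ v : V, ((n:ℝ) * q v - 1) :=
      Finset.sum_le_sum fun v _ => Real.log_le_sub_one_of_pos (mul_pos hnR (hq_pos v))
    have h2 : ∑ v : V, ((n:ℝ) * q v - 1) = (n:ℝ) * (∑ v : V, q v) - n := by
      rw [Finset.sum_sub_distrib, ← Finset.mul_sum]
      simp [hn]
    have h3 : ∑ v : V, Real.log ((n:ℝ) * q v)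
        = (n:ℝ) * Real.log n + ∑ v : V, Real.log (q v) := by
      have : ∀ v : V, Real.log ((n:ℝ) * q v) = Real.log n + Real.log (q v) :=
        fun v => Real.log_mul hnR.ne' (hq_pos v).ne'
      rw [Finset.sum_congr rfl fun v _ => this v, Finset.sum_add_distrib,
        Finset.sum_const, nsmul_eq_mul]
      simp [hn]
    have h4 : (n:ℝ) * (∑ v : V, q v) ≤ (n:ℝ) * 1 :=
      mul_le_mul_of_nonneg_left hsumq hnR.le
    rw [h3, h2] at h1
    linarith
  -- put everything together
  have hmain : (n:ℝ) * Real.log n ≤ (n:ℝ) * ((W.card : ℝ) * Hmax) := by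
    have e1 : - ∑ v : V, Real.log (q v)
        = ∑ w : ↥W, (n:ℝ) *
            (- ∑ t ∈ Finset.range (D+1), p (w:V) t * Real.log (p (w:V) t)) := by
      rw [Finset.sum_congr rfl fun v (_ : v ∈ Finset.univ) => hlogq v, Finset.sum_comm]
      rw [← Finset.sum_neg_distrib]
      refine Finset.sum_congr rfl fun w _ => ?_
      rw [hA (w : V)]
      ring
    have e2 : ∑ w : ↥W, (n:ℝ) *
        (- ∑ t ∈ Finset.range (D+1), p (w:V) t * Real.log (p (w:V) t))
        ≤ ∑ w : ↥W, (n:ℝ) * Hmax :=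
      Finset.sum_le_sum fun w _ =>
        mul_le_mul_of_nonneg_left (hent' (w : V)) hnR.le
    have e3 : ∑ w : ↥W, (n:ℝ) * Hmax = (n:ℝ) * ((W.card : ℝ) * Hmax) := by
      rw [Finset.sum_const, nsmul_eq_mul]
      simp [Fintype.card_coe]
      ring
    calc (n:ℝ) * Real.log n ≤ - ∑ v : V, Real.log (q v) := hB
      _ = _ := e1
      _ ≤ _ := e2
      _ = _ := e3
  have hlog : Real.log n ≤ (W.card : ℝ) * Hmax :=
    le_of_mul_le_mul_left (by linarith [hmain]) hnR
  rw [div_le_iff₀ hHmax, ← hWcard]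
  exact hlog
end

section
/- For any connected graph G on n vertices with diameter Diam ≥ 2, n ≤ Diam^{MD(G)} + MD(G). -/
/-- For any connected graph on `n` vertices with diameter `Diam ≥ 2`,
`n ≤ Diam ^ MD(G) + MD(G)`. -/
theorem stmt_3 {V : Type*} [Fintype V] (G : SimpleGraph V) (hG : G.Connected)
    (hdiam : 2 ≤ G.diam) :
    Fintype.card V ≤ G.diam ^ metricDim G + metricDim G := by
  classical
  have hetop : G.ediam ≠ ⊤ := by
    intro h
    rw [SimpleGraph.diam, h, ENat.toNat_top] at hdiam
    omega
  have hne : {k | ∃ W : Finset V, W.card = k ∧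
      ∀ u v : V, u ≠ v → ∃ w ∈ W, G.dist u w ≠ G.dist v w}.Nonempty := by
    refine ⟨Fintype.card V, Finset.univ, Finset.card_univ, fun u v huv => ?_⟩
    refine ⟨u, Finset.mem_univ u, ?_⟩
    rw [SimpleGraph.dist_self]
    exact ((hG.pos_dist_of_ne (Ne.symm huv)).ne').symm
  obtain ⟨W, hWcard, hres⟩ := Nat.sInf_mem hne
  -- map vertices outside W injectively into functions W → Fin diam
  have hdist_pos : ∀ (v : V) (w : V), v ∉ W → w ∈ W → 0 < G.dist v w := by
    intro v w hv hw
    exact hG.pos_dist_of_ne (fun h => hv (h ▸ hw))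
  let f : {v : V // v ∉ W} → (W → Fin G.diam) := fun v w =>
    ⟨G.dist v.1 w.1 - 1, by
      have h1 := hdist_pos v.1 w.1 v.2 w.2
      have h2 := G.dist_le_diam hetop (u := v.1) (v := w.1)
      omega⟩
  have hinj : Function.Injective f := by
    intro a b hab
    by_contra hne'
    obtain ⟨w, hw, hwd⟩ := hres a.1 b.1 (fun h => hne' (Subtype.ext h))
    have := congrFun hab ⟨w, hw⟩
    simp only [f, Fin.mk.injEq] at this
    have h1 := hdist_pos a.1 w a.2 hw
    have h2 := hdist_pos b.1 w b.2 hw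
    omega
  have hcard1 : Fintype.card {v : V // v ∉ W} ≤ G.diam ^ metricDim G := by
    calc Fintype.card {v : V // v ∉ W} ≤ Fintype.card (W → Fin G.diam) :=
          Fintype.card_le_of_injective f hinj
      _ = G.diam ^ W.card := by simp [Fintype.card_fun]
      _ = G.diam ^ metricDim G := by rw [hWcard]; rfl
  have hcard2 : Fintype.card {v : V // v ∉ W} = Fintype.card V - W.card := by
    rw [Fintype.card_subtype_compl, Fintype.card_coe]
  have hWle : W.card ≤ Fintype.card V := W.card_le_univ.trans_eq Finset.card_univ
  have : W.card = metricDim G := hWcard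
  omega
end

section
/- Let G be a graph on n vertices such that for every pair of distinct vertices u, v the set S(u,v) = {w : d(u,w) ≠ d(v,w)} satisfies |S(u,v)| ≥ σn for some σ ∈ (0,1). Then MD(G) ≤ ⌈2 log n / (-log(1-σ))⌉. -/
open scoped Classical

/-- If every pair of distinct vertices of `G` is separated by at least `σ n` vertices,
then `MD(G) ≤ ⌈2 log n / (-log (1 - σ))⌉`. -/
theorem stmt_6 {V : Type*} [Fintype V] (G : SimpleGraph V) (hG : G.Connected)
    (σ : ℝ) (hσ0 : 0 < σ) (hσ1 : σ < 1)
    (hsep : ∀ u v : V, u ≠ v →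
      σ * Fintype.card V ≤
        ((Finset.univ.filter fun w : V => G.dist u w ≠ G.dist v w).card : ℝ)) :
    metricDim G ≤ ⌈2 * Real.log (Fintype.card V) / (-Real.log (1 - σ))⌉₊ := by
  classical
  set n := Fintype.card V with hn
  set k := ⌈2 * Real.log n / (-Real.log (1 - σ))⌉₊ with hk
  suffices h : ∃ W : Finset V, W.card ≤ k ∧
      ∀ u v : V, u ≠ v → ∃ w ∈ W, G.dist u w ≠ G.dist v w by
    obtain ⟨W, hWc, hW⟩ := h
    exact le_trans (Nat.sInf_le ⟨W, rfl, hW⟩) hWc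
  rcases lt_or_ge n 2 with hn2 | hn2
  · refine ⟨∅, by simp, fun u v huv => ?_⟩
    have hc : Fintype.card V ≤ 1 := by omega
    exact absurd (Fintype.card_le_one_iff.mp hc u v) huv
  -- now `n ≥ 2`
  have hn0 : (0:ℝ) < n := by exact_mod_cast Nat.lt_of_lt_of_le Nat.zero_lt_two hn2
  have h1σ : (0:ℝ) < 1 - σ := by linarith
  have hL : Real.log (1 - σ) < 0 := Real.log_neg h1σ (by linarith)
  have hLpos : 0 < -Real.log (1 - σ) := by linarith
  -- key analytic inequality: (1-σ)^k ≤ 1 / n²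
  have hkey : ((1 - σ):ℝ)^k ≤ ((n:ℝ)^2)⁻¹ := by
    have h2 : 2 * Real.log n / (-Real.log (1 - σ)) ≤ (k:ℝ) := Nat.le_ceil _
    have h3 : 2 * Real.log n ≤ (k:ℝ) * (-Real.log (1 - σ)) := by
      rw [div_le_iff₀ hLpos] at h2; linarith
    have h4 : (k:ℝ) * Real.log (1 - σ) ≤ -(2 * Real.log n) := by linarith
    have h5 : ((1 - σ):ℝ)^k = Real.exp ((k:ℝ) * Real.log (1 - σ)) := by
      rw [Real.exp_nat_mul, Real.exp_log h1σ]
    have h6 : Real.exp (-(2 * Real.log n)) = ((n:ℝ)^2)⁻¹ := by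
      rw [Real.exp_neg]
      congr 1
      rw [show (2:ℝ) * Real.log n = Real.log ((n:ℝ)^2) by
        rw [Real.log_pow]; push_cast; ring]
      exact Real.exp_log (by positivity)
    calc ((1 - σ):ℝ)^k = Real.exp ((k:ℝ) * Real.log (1 - σ)) := h5
      _ ≤ Real.exp (-(2 * Real.log n)) := Real.exp_le_exp.mpr h4
      _ = ((n:ℝ)^2)⁻¹ := h6
  -- bad tuples for a pair
  set T : V × V → Finset V := fun p => Finset.univ.filter fun w => G.dist p.1 w = G.dist p.2 w
    with hT
  set bad : V × V → Finset (Fin k → V) := fun p => Fintype.piFinset fun _ => T p with hbad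
  have hTcard : ∀ p : V × V, p.1 ≠ p.2 → ((T p).card : ℝ) ≤ (1 - σ) * n := by
    intro p hp
    have hsplit := Finset.card_filter_add_card_filter_not
      (s := (Finset.univ : Finset V)) (p := fun w => G.dist p.1 w = G.dist p.2 w)
    have hs := hsep p.1 p.2 hp
    have hcast : ((T p).card : ℝ) +
        ((Finset.univ.filter fun w : V => G.dist p.1 w ≠ G.dist p.2 w).card : ℝ) = n := by
      rw [hT]
      exact_mod_cast hsplit
    linarith
  have hbadcard : ∀ p : V × V, (bad p).card = (T p).card ^ k := by
    intro p
    simp [hbad, Fintype.card_piFinset]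
  set U : Finset (Fin k → V) := (Finset.univ : Finset V).offDiag.biUnion bad with hU
  have hUcard : (U.card : ℝ) < ((n:ℝ))^k := by
    have h1 : U.card ≤ ∑ p ∈ (Finset.univ : Finset V).offDiag, (bad p).card := Finset.card_biUnion_le
    have h2 : ((∑ p ∈ (Finset.univ : Finset V).offDiag, (bad p).card : ℕ) : ℝ) ≤
        (((Finset.univ : Finset V).offDiag.card : ℝ)) * (((1 - σ) * n)^k) := by
      push_cast
      have := Finset.sum_le_card_nsmul ((Finset.univ : Finset V).offDiag)
        (fun p => ((bad p).card : ℝ)) (((1 - σ) * n)^k) ?_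
      · simpa [nsmul_eq_mul] using this
      · intro p hp
        show ((bad p).card : ℝ) ≤ _
        rw [hbadcard]
        push_cast
        have hp' : p.1 ≠ p.2 := (Finset.mem_offDiag.mp hp).2.2
        exact pow_le_pow_left₀ (Nat.cast_nonneg _) (hTcard p hp') k
    have hod : (((Finset.univ : Finset V).offDiag.card : ℕ) : ℝ) = (n:ℝ)^2 - n := by
      rw [Finset.offDiag_card]
      have : (n:ℕ) * n - n = n^2 - n := by ring_nf
      simp only [Finset.card_univ, ← hn]
      push_cast [Nat.cast_sub (by nlinarith : n ≤ n * n)]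
      ring
    have h3 : ((n:ℝ)^2 - n) * (((1 - σ) * n)^k) < (n:ℝ)^k := by
      have hrw : (((1 - σ) * n)^k : ℝ) = (1 - σ)^k * (n:ℝ)^k := by rw [mul_pow]
      rw [hrw, ← mul_assoc]
      have hnk : (0:ℝ) < (n:ℝ)^k := by positivity
      have h4 : ((n:ℝ)^2 - n) * (1 - σ)^k < 1 := by
        have h5 : ((n:ℝ)^2 - n) * (1 - σ)^k ≤ ((n:ℝ)^2 - n) * ((n:ℝ)^2)⁻¹ := by
          apply mul_le_mul_of_nonneg_left hkey
          nlinarith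
        have h6 : ((n:ℝ)^2 - n) * ((n:ℝ)^2)⁻¹ < 1 := by
          rw [mul_inv_lt_iff₀ (by positivity)]
          nlinarith
        linarith
      nlinarith
    calc (U.card : ℝ) ≤ ((∑ p ∈ (Finset.univ : Finset V).offDiag, (bad p).card : ℕ) : ℝ) := by
          exact_mod_cast h1
      _ ≤ (((Finset.univ : Finset V).offDiag.card : ℝ)) * (((1 - σ) * n)^k) := h2
      _ = ((n:ℝ)^2 - n) * (((1 - σ) * n)^k) := by rw [← hod]
      _ < (n:ℝ)^k := h3
  -- find a good tuple
  have hex : ∃ f : Fin k → V, f ∉ U := by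
    by_contra hcon
    push_neg at hcon
    have hsub : (Finset.univ : Finset (Fin k → V)) ⊆ U := fun f _ => hcon f
    have hle := Finset.card_le_card hsub
    have : (Finset.univ : Finset (Fin k → V)).card = n ^ k := by
      simp [Finset.card_univ, Fintype.card_fun, hn]
    rw [this] at hle
    have : ((n:ℝ))^k ≤ (U.card : ℝ) := by exact_mod_cast hle
    linarith
  obtain ⟨f, hf⟩ := hex
  refine ⟨Finset.image f Finset.univ, ?_, ?_⟩
  · exact (Finset.card_image_le).trans (by simp)
  · intro u v huv
    have hmem : (u, v) ∈ (Finset.univ : Finset V).offDiag := by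
      simp [Finset.mem_offDiag, huv]
    have hfb : f ∉ bad (u, v) := fun hb => hf (Finset.mem_biUnion.mpr ⟨(u, v), hmem, hb⟩)
    rw [hbad] at hfb
    simp only [Fintype.mem_piFinset, hT, Finset.mem_filter, Finset.mem_univ, true_and,
      not_forall] at hfb
    obtain ⟨i, hi⟩ := hfb
    exact ⟨f i, Finset.mem_image_of_mem f (Finset.mem_univ i), hi⟩
end
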